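/- For the 2-qubit Peres–Mermin square observables O_{jk} and any density matrix ρ on ℂ⁴, the quantity L(ρ) = |−Σ_{k} Tr(ρ O_{1k}O_{2k}O_{3k}) + Σ_j Tr(ρ O_{j1}O_{j2}O_{j3})| equals 6, independently of ρ. -/

import Mathlib

open Matrix
open scoped Kronecker ComplexOrder

namespace PeresMermin

noncomputable def σx : Matrix (Fin 2) (Fin 2) ℂ := !![0, 1; 1, 0]
noncomputable def σy : Matrix (Fin 2) (Fin 2) ℂ := !![0, -Complex.I; Complex.I, 0]
noncomputable def σz : Matrix (Fin 2) (Fin 2) ℂ := !![1, 0; 0, -1]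

/-- The nine 4×4 observables of the two-qubit Peres–Mermin square. -/
noncomputable def O : Fin 3 → Fin 3 → Matrix (Fin 2 × Fin 2) (Fin 2 × Fin 2) ℂ :=
  ![![σx ⊗ₖ 1, 1 ⊗ₖ σz, -(σx ⊗ₖ σz)],
    ![1 ⊗ₖ σx, σz ⊗ₖ 1, -(σz ⊗ₖ σx)],
    ![σx ⊗ₖ σx, σz ⊗ₖ σz, σy ⊗ₖ σy]]

set_option maxHeartbeats 1000000 in
lemma col_prod (k : Fin 3) : O 0 k * O 1 k * O 2 k = 1 := by
  fin_cases k <;>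
  · ext ⟨a, b⟩ ⟨c, d⟩
    fin_cases a <;> fin_cases b <;> fin_cases c <;> fin_cases d <;>
      simp [O, σx, σy, σz, Matrix.mul_apply, Matrix.one_apply,
        Fintype.sum_prod_type, Fin.sum_univ_succ, Prod.ext_iff]

set_option maxHeartbeats 1000000 in
lemma row_prod (j : Fin 3) : O j 0 * O j 1 * O j 2 = -1 := by
  fin_cases j <;>
  · ext ⟨a, b⟩ ⟨c, d⟩
    fin_cases a <;> fin_cases b <;> fin_cases c <;> fin_cases d <;>
      simp [O, σx, σy, σz, Matrix.mul_apply, Matrix.one_apply,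
        Fintype.sum_prod_type, Fin.sum_univ_succ, Prod.ext_iff]

/-- State independence of the Peres–Mermin value: for every density matrix `ρ`
on `ℂ⁴`, `L(ρ) = |−Σ_k Tr(ρ O₁ₖO₂ₖO₃ₖ) + Σ_j Tr(ρ Oⱼ₁Oⱼ₂Oⱼ₃)| = 6`. -/
theorem state_independent_value
    (ρ : Matrix (Fin 2 × Fin 2) (Fin 2 × Fin 2) ℂ)
    (hρ : ρ.PosSemidef) (htr : ρ.trace = 1) :
    ‖(-(∑ k : Fin 3, (ρ * (O 0 k * O 1 k * O 2 k)).trace)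
        + ∑ j : Fin 3, (ρ * (O j 0 * O j 1 * O j 2)).trace)‖ = 6 := by
  simp only [col_prod, row_prod, Matrix.mul_one, Matrix.mul_neg,
    Matrix.trace_neg, htr, Finset.sum_const, Finset.card_univ]
  norm_num
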